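/- Let P(q,t) = qt^3/(1-q^2 t^2) · ∏_{j≥0} 1/(1 - q^{2^j-1} t^{2^j}) and F(q) = q/(1-q^2) · ∏_{j≥1} 1/(1 - q^{2^j-1}) in ℤ[[q]][[t]] and ℤ[[q]] respectively. Then for every i ≥ 0, the coefficient of q^i t^n in P stabilizes as n → ∞ over odd n: for all odd n with n ≥ 2i + 3, the coefficient of q^i t^n in P equals the coefficient of q^i in F. -/

import Mathlib

open PowerSeries Finset


/-- The variable `q` in `ℤ⟦q⟧⟦t⟧`. -/
noncomputable def qv : PowerSeries (PowerSeries ℤ) :=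
  PowerSeries.C (R := PowerSeries ℤ) PowerSeries.X

/-- The variable `t` in `ℤ⟦q⟧⟦t⟧`. -/
noncomputable def tv : PowerSeries (PowerSeries ℤ) := PowerSeries.X

/-- The inverse `1/(1 - q^(2^j-1) t^(2^j))` in `ℤ⟦q⟧⟦t⟧`. -/
noncomputable def factorInv (j : ℕ) : PowerSeries (PowerSeries ℤ) :=
  PowerSeries.invOfUnit (1 - qv ^ (2 ^ j - 1) * tv ^ (2 ^ j)) 1

/-- The infinite product `∏_{j ≥ 0} 1/(1 - q^(2^j-1) t^(2^j))`, interpreted as the t-adic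
limit of partial products: the coefficient of `t^n` is that of any sufficiently large partial
product (factors with `2^j > n` do not affect coefficients of `t`-degree `≤ n`). -/
noncomputable def prodQT : PowerSeries (PowerSeries ℤ) :=
  PowerSeries.mk fun n =>
    PowerSeries.coeff (R := PowerSeries ℤ) n (∏ j ∈ Finset.range (n + 1), factorInv j)

/-- The series `P(q,t) = q t^3/(1 - q^2 t^2) · ∏_{j≥0} 1/(1 - q^(2^j-1) t^(2^j))`. -/
noncomputable def Pqt : PowerSeries (PowerSeries ℤ) :=
  qv * tv ^ 3 * PowerSeries.invOfUnit (1 - qv ^ 2 * tv ^ 2) 1 * prodQT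

/-- The coefficient of `q^i t^n` in a two-variable series. -/
noncomputable def coeffQT (f : PowerSeries (PowerSeries ℤ)) (i n : ℕ) : ℤ :=
  PowerSeries.coeff (R := ℤ) i (PowerSeries.coeff (R := PowerSeries ℤ) n f)

/-- The inverse of `1 - q^k` in `ℤ⟦q⟧` (geometric series), for `k ≥ 1`. -/
noncomputable def geomInv (k : ℕ) : PowerSeries ℤ :=
  PowerSeries.invOfUnit (1 - (PowerSeries.X : PowerSeries ℤ) ^ k) 1

/-- The infinite product `∏_{j ≥ 1} 1/(1 - q^(2^j - 1))`, interpreted as the q-adic limit of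
partial products: its `m`-th coefficient is the `m`-th coefficient of any sufficiently large
partial product (factors with `2^j - 1 > m` do not affect coefficients of degree `≤ m`). -/
noncomputable def prodStable : PowerSeries ℤ :=
  PowerSeries.mk fun m =>
    PowerSeries.coeff (R := ℤ) m (∏ j ∈ Finset.range (m + 1), geomInv (2 ^ (j + 1) - 1))

/-- The stable Poincaré series `F(q) = q/(1-q^2) · ∏_{j≥1} 1/(1 - q^(2^j-1))`. -/
noncomputable def Fser : PowerSeries ℤ :=
  PowerSeries.X * PowerSeries.invOfUnit (1 - (PowerSeries.X : PowerSeries ℤ) ^ 2) 1 * prodStable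


lemma geom_rel {A : Type*} [CommRing A] (u : PowerSeries A) (hu : constantCoeff (R := A) u = 0) :
    invOfUnit (1 - u) 1 = 1 + u * invOfUnit (1 - u) 1 := by
  have h : (1 - u) * invOfUnit (1 - u) 1 = 1 :=
    mul_invOfUnit _ 1 (by simp [hu])
  linear_combination h

lemma coeff_geomInvOfUnit {A : Type*} [CommRing A] (r : A) (b : ℕ) (hb : 1 ≤ b) (m : ℕ) :
    PowerSeries.coeff (R := A) m (PowerSeries.invOfUnit (1 - PowerSeries.C (R := A) r * PowerSeries.X ^ b) 1)
      = if b ∣ m then r ^ (m / b) else 0 := by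
  induction m using Nat.strong_induction_on with
  | _ m ih =>
    have hu : constantCoeff (R := A) (C (R := A) r * X ^ b) = 0 := by
      have hx : (constantCoeff (R := A)) ((X : PowerSeries A) ^ b) = 0 := by
        rw [← coeff_zero_eq_constantCoeff_apply, coeff_X_pow, if_neg (by omega)]
      simp [map_mul, hx]
    have hrel := geom_rel (C (R := A) r * X ^ b) hu
    rw [hrel, map_add, coeff_one, mul_assoc, coeff_C_mul, coeff_X_pow_mul']
    by_cases hbm : b ≤ m
    · rw [if_pos hbm, if_neg (by omega), ih (m - b) (by omega), zero_add]
      by_cases hd : b ∣ m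
      · obtain ⟨k, rfl⟩ := hd
        have hk : 1 ≤ k := by
          rcases Nat.eq_zero_or_pos k with h0 | h1
          · subst h0; omega
          · exact h1
        have e1 : b * (k - 1) + b = b * k := by
          have h2 : k - 1 + 1 = k := by omega
          calc b * (k - 1) + b = b * (k - 1 + 1) := by ring
            _ = b * k := by rw [h2]
        have e2 : b * k - b = b * (k - 1) := by omega
        rw [if_pos ⟨k - 1, e2⟩, if_pos ⟨k, rfl⟩, e2,
          Nat.mul_div_cancel_left _ (by omega : 0 < b),
          Nat.mul_div_cancel_left _ (by omega : 0 < b), ← pow_succ']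
        congr 1
        omega
      · rw [if_neg (fun hd2 => hd (by
          obtain ⟨k, hk⟩ := hd2
          refine ⟨k + 1, ?_⟩
          have h2 : b * (k + 1) = b * k + b := by ring
          omega)), if_neg hd, mul_zero]
    · rw [if_neg hbm, mul_zero, add_zero]
      by_cases h0 : m = 0
      · subst h0; simp
      · rw [if_neg h0, if_neg (fun hd => h0 (Nat.eq_zero_of_dvd_of_lt hd (by omega)))]


lemma coeff_geomInv (k e : ℕ) (hk : 1 ≤ k) :
    PowerSeries.coeff (R := ℤ) e (geomInv k) = if k ∣ e then 1 else 0 := by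
  have h := coeff_geomInvOfUnit (1 : ℤ) k hk e
  rw [map_one, one_mul] at h
  rw [geomInv, h]
  simp

lemma qv_pow_C (a : ℕ) : qv ^ a = PowerSeries.C (R := PowerSeries ℤ) (PowerSeries.X ^ a) := by
  rw [qv, map_pow]

lemma coeff_factor (a b m : ℕ) (hb : 1 ≤ b) :
    PowerSeries.coeff (R := PowerSeries ℤ) m (PowerSeries.invOfUnit (1 - qv ^ a * tv ^ b) 1)
      = if b ∣ m then (PowerSeries.X : PowerSeries ℤ) ^ (a * (m / b)) else 0 := by
  have h := coeff_geomInvOfUnit (A := PowerSeries ℤ) (PowerSeries.X ^ a) b hb m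
  rw [← qv_pow_C] at h
  rw [tv] at *
  rw [h, ← pow_mul]

-- support bound
def Bnd (c : ℕ) (f : PowerSeries (PowerSeries ℤ)) : Prop :=
  ∀ e m : ℕ, 2 * e + c < m →
    PowerSeries.coeff (R := ℤ) e (PowerSeries.coeff (R := PowerSeries ℤ) m f) = 0

lemma bnd_factor (a b : ℕ) (hb : 1 ≤ b) (hba : b ≤ 2 * a) :
    Bnd 0 (PowerSeries.invOfUnit (1 - qv ^ a * tv ^ b) 1) := by
  intro e m h
  rw [coeff_factor a b m hb]
  by_cases hd : b ∣ m
  · rw [if_pos hd, coeff_X_pow, if_neg ?_]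
    obtain ⟨k, rfl⟩ := hd
    rw [Nat.mul_div_cancel_left k (by omega : 0 < b)]
    intro heq
    have h1 : b * k ≤ 2 * (a * k) := by
      calc b * k ≤ (2 * a) * k := Nat.mul_le_mul_right k hba
        _ = 2 * (a * k) := by ring
    omega
  · rw [if_neg hd, map_zero]

lemma ct_qt3 (m : ℕ) :
    PowerSeries.coeff (R := PowerSeries ℤ) m (qv * tv ^ 3)
      = if m = 3 then PowerSeries.X else 0 := by
  rw [qv, tv, coeff_C_mul, coeff_X_pow]
  split_ifs <;> simp

lemma bnd_qt3 : Bnd 1 (qv * tv ^ 3) := by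
  intro e m h
  rw [ct_qt3]
  split_ifs with h3
  · subst h3
    have he : e = 0 := by omega
    subst he
    rw [coeff_X, if_neg (by omega)]
  · rw [map_zero]

lemma term_zero {c₁ c₂ : ℕ} {f g : PowerSeries (PowerSeries ℤ)}
    (hf : Bnd c₁ f) (hg : Bnd c₂ g) (e a b : ℕ) (hab : 2 * e + (c₁ + c₂) < a + b) :
    PowerSeries.coeff (R := ℤ) e
      (PowerSeries.coeff (R := PowerSeries ℤ) a f * PowerSeries.coeff (R := PowerSeries ℤ) b g) = 0 := by
  rw [coeff_mul]
  apply Finset.sum_eq_zero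
  rintro ⟨e1, e2⟩ he
  rw [Finset.HasAntidiagonal.mem_antidiagonal] at he
  rcases (by omega : 2 * e1 + c₁ < a ∨ 2 * e2 + c₂ < b) with h1 | h1
  · rw [hf e1 a h1, zero_mul]
  · rw [hg e2 b h1, mul_zero]

lemma bnd_mul {c₁ c₂ : ℕ} {f g : PowerSeries (PowerSeries ℤ)}
    (hf : Bnd c₁ f) (hg : Bnd c₂ g) : Bnd (c₁ + c₂) (f * g) := by
  intro e m h
  rw [coeff_mul, map_sum]
  apply Finset.sum_eq_zero
  rintro ⟨a, b⟩ hab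
  rw [Finset.HasAntidiagonal.mem_antidiagonal] at hab
  exact term_zero hf hg e a b (by omega)

noncomputable def sigs (M : ℕ) (f : PowerSeries (PowerSeries ℤ)) : PowerSeries ℤ :=
  ∑ m ∈ Finset.range M, PowerSeries.coeff (R := PowerSeries ℤ) m f

lemma sig_mul {c₁ c₂ : ℕ} {f g : PowerSeries (PowerSeries ℤ)}
    (hf : Bnd c₁ f) (hg : Bnd c₂ g) (e M : ℕ) (hM : 2 * e + (c₁ + c₂) < M) :
    PowerSeries.coeff (R := ℤ) e (sigs M (f * g))
      = PowerSeries.coeff (R := ℤ) e (sigs M f * sigs M g) := by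
  classical
  set T : ℕ × ℕ → ℤ := fun p =>
    PowerSeries.coeff (R := ℤ) e
      (PowerSeries.coeff (R := PowerSeries ℤ) p.1 f * PowerSeries.coeff (R := PowerSeries ℤ) p.2 g) with hT
  have hdisj : Set.PairwiseDisjoint ↑(Finset.range M)
      (Finset.HasAntidiagonal.antidiagonal : ℕ → Finset (ℕ × ℕ)) := by
    intro x _ y _ hxy
    rw [Function.onFun, Finset.disjoint_left]
    intro p hp hp'
    rw [Finset.HasAntidiagonal.mem_antidiagonal] at hp hp'
    exact hxy (by omega)
  have hL : PowerSeries.coeff (R := ℤ) e (sigs M (f * g))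
      = ∑ p ∈ (Finset.range M).biUnion Finset.HasAntidiagonal.antidiagonal, T p := by
    rw [sigs, map_sum, Finset.sum_biUnion hdisj]
    refine Finset.sum_congr rfl fun m _ => ?_
    rw [coeff_mul, map_sum]
  have hR : PowerSeries.coeff (R := ℤ) e (sigs M f * sigs M g)
      = ∑ p ∈ Finset.range M ×ˢ Finset.range M, T p := by
    rw [sigs, sigs, Finset.sum_mul_sum, map_sum]
    rw [Finset.sum_product]
    refine Finset.sum_congr rfl fun a _ => ?_
    rw [map_sum]
  rw [hL, hR]
  apply Finset.sum_subset
  · intro p hp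
    rw [Finset.mem_biUnion] at hp
    obtain ⟨m, hm, hpm⟩ := hp
    rw [Finset.mem_range] at hm
    rw [Finset.HasAntidiagonal.mem_antidiagonal] at hpm
    rw [Finset.mem_product, Finset.mem_range, Finset.mem_range]
    omega
  · intro p hp hnp
    have hge : M ≤ p.1 + p.2 := by
      by_contra hlt
      exact hnp (Finset.mem_biUnion.2 ⟨p.1 + p.2, Finset.mem_range.2 (by omega),
        Finset.HasAntidiagonal.mem_antidiagonal.2 rfl⟩)
    exact term_zero hf hg e p.1 p.2 (by omega)

lemma sig_qt3 {M : ℕ} (hM : 4 ≤ M) : sigs M (qv * tv ^ 3) = PowerSeries.X := by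
  rw [sigs]
  have h1 : ∑ m ∈ Finset.range M, PowerSeries.coeff (R := PowerSeries ℤ) m (qv * tv ^ 3)
      = ∑ m ∈ Finset.range M, (if m = 3 then (PowerSeries.X : PowerSeries ℤ) else 0) :=
    Finset.sum_congr rfl fun m _ => ct_qt3 m
  rw [h1, Finset.sum_ite_eq' (Finset.range M) 3 (fun _ => PowerSeries.X),
    if_pos (Finset.mem_range.2 (by omega))]

lemma cq_sig_factor (a b e M : ℕ) (ha : 1 ≤ a) (hb : 1 ≤ b) (hba : b ≤ 2 * a)
    (he : 2 * e < M) :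
    PowerSeries.coeff (R := ℤ) e (sigs M (PowerSeries.invOfUnit (1 - qv ^ a * tv ^ b) 1))
      = PowerSeries.coeff (R := ℤ) e (geomInv a) := by
  rw [sigs, map_sum, coeff_geomInv a e ha]
  have step : ∀ m : ℕ,
      PowerSeries.coeff (R := ℤ) e
        (PowerSeries.coeff (R := PowerSeries ℤ) m (PowerSeries.invOfUnit (1 - qv ^ a * tv ^ b) 1))
      = if a ∣ e ∧ m = b * (e / a) then 1 else 0 := by
    intro m
    rw [coeff_factor a b m hb]
    by_cases hd : b ∣ m
    · rw [if_pos hd, coeff_X_pow]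
      obtain ⟨k, rfl⟩ := hd
      rw [Nat.mul_div_cancel_left k (by omega : 0 < b)]
      by_cases he' : e = a * k
      · subst he'
        rw [if_pos rfl, if_pos ⟨dvd_mul_right a k, by
          rw [Nat.mul_div_cancel_left k (by omega : 0 < a)]⟩]
      · rw [if_neg he', if_neg ?_]
        rintro ⟨hae, hbk⟩
        apply he'
        have hk : k = e / a := Nat.eq_of_mul_eq_mul_left (by omega) hbk
        rw [hk, Nat.mul_div_cancel' hae]
    · rw [if_neg hd, map_zero, if_neg ?_]
      rintro ⟨hae, rfl⟩
      exact hd (dvd_mul_right b (e / a))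
  have h1 : ∑ m ∈ Finset.range M, PowerSeries.coeff (R := ℤ) e
        (PowerSeries.coeff (R := PowerSeries ℤ) m (PowerSeries.invOfUnit (1 - qv ^ a * tv ^ b) 1))
      = ∑ m ∈ Finset.range M, (if a ∣ e ∧ m = b * (e / a) then (1 : ℤ) else 0) :=
    Finset.sum_congr rfl fun m _ => step m
  rw [h1]
  by_cases hae : a ∣ e
  · have hlt : b * (e / a) < M := by
      have h2 : b * (e / a) ≤ 2 * a * (e / a) := Nat.mul_le_mul_right _ hba
      have h3 : a * (e / a) = e := Nat.mul_div_cancel' hae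
      have h4 : 2 * a * (e / a) = 2 * (a * (e / a)) := by ring
      omega
    have h2 : ∀ m ∈ Finset.range M, (if a ∣ e ∧ m = b * (e / a) then (1 : ℤ) else 0)
        = if m = b * (e / a) then (1 : ℤ) else 0 := fun m _ => by simp [hae]
    rw [Finset.sum_congr rfl h2,
      Finset.sum_ite_eq' (Finset.range M) (b * (e / a)) (fun _ => (1 : ℤ)),
      if_pos (Finset.mem_range.2 hlt), if_pos hae]
  · simp only [hae, false_and, if_false, Finset.sum_const_zero]

lemma constCoeff_qt (a b : ℕ) (hb : 1 ≤ b) :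
    PowerSeries.constantCoeff (R := PowerSeries ℤ) (qv ^ a * tv ^ b) = 0 := by
  rw [tv, map_mul]
  have hx : (PowerSeries.constantCoeff (R := PowerSeries ℤ)) ((PowerSeries.X : PowerSeries (PowerSeries ℤ)) ^ b) = 0 := by
    rw [← coeff_zero_eq_constantCoeff_apply, coeff_X_pow, if_neg (by omega)]
  rw [hx, mul_zero]

lemma ct_mul_factor_high (h : PowerSeries (PowerSeries ℤ)) (j m : ℕ) (hm : m < 2 ^ j) :
    PowerSeries.coeff (R := PowerSeries ℤ) m (h * factorInv j)
      = PowerSeries.coeff (R := PowerSeries ℤ) m h := by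
  have hrel := geom_rel _ (constCoeff_qt (2 ^ j - 1) (2 ^ j) (Nat.one_le_two_pow))
  rw [factorInv, hrel, mul_add, mul_one, map_add]
  have h2 : h * (qv ^ (2 ^ j - 1) * tv ^ (2 ^ j) *
        PowerSeries.invOfUnit (1 - qv ^ (2 ^ j - 1) * tv ^ (2 ^ j)) 1)
      = (PowerSeries.X : PowerSeries (PowerSeries ℤ)) ^ (2 ^ j) *
        (h * (qv ^ (2 ^ j - 1) *
          PowerSeries.invOfUnit (1 - qv ^ (2 ^ j - 1) * tv ^ (2 ^ j)) 1)) := by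
    rw [tv]; ring
  rw [h2, coeff_X_pow_mul', if_neg (by omega), add_zero]

lemma cq_mul_geom_high (h : PowerSeries ℤ) (k e : ℕ) (hk : 1 ≤ k) (he : e < k) :
    PowerSeries.coeff (R := ℤ) e (h * geomInv k) = PowerSeries.coeff (R := ℤ) e h := by
  have hu : PowerSeries.constantCoeff (R := ℤ) ((PowerSeries.X : PowerSeries ℤ) ^ k) = 0 := by
    rw [← coeff_zero_eq_constantCoeff_apply, coeff_X_pow, if_neg (by omega)]
  have hrel := geom_rel _ hu
  rw [geomInv, hrel, mul_add, mul_one, map_add]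
  have h2 : h * ((PowerSeries.X : PowerSeries ℤ) ^ k *
        PowerSeries.invOfUnit (1 - (PowerSeries.X : PowerSeries ℤ) ^ k) 1)
      = (PowerSeries.X : PowerSeries ℤ) ^ k *
        (h * PowerSeries.invOfUnit (1 - (PowerSeries.X : PowerSeries ℤ) ^ k) 1) := by ring
  rw [h2, coeff_X_pow_mul', if_neg (by omega), add_zero]

lemma prodQT_stab (b N : ℕ) (hb : b ≤ N) :
    PowerSeries.coeff (R := PowerSeries ℤ) b (∏ j ∈ Finset.range (N + 1), factorInv j)
      = PowerSeries.coeff (R := PowerSeries ℤ) b (∏ j ∈ Finset.range (b + 1), factorInv j) := by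
  induction N with
  | zero =>
    have hb0 : b = 0 := by omega
    subst hb0; rfl
  | succ N ih =>
    rcases Nat.lt_or_ge b (N + 1) with hlt | hge
    · rw [Finset.prod_range_succ, ct_mul_factor_high _ (N + 1) b
        (by
          have := Nat.lt_two_pow_self (n := N + 1)
          omega),
        ih (by omega)]
    · have hb1 : b = N + 1 := by omega
      subst hb1; rfl

lemma prodStable_stab (d K : ℕ) (hd : d ≤ K) :
    PowerSeries.coeff (R := ℤ) d (∏ j ∈ Finset.range (K + 1), geomInv (2 ^ (j + 1) - 1))
      = PowerSeries.coeff (R := ℤ) d (∏ j ∈ Finset.range (d + 1), geomInv (2 ^ (j + 1) - 1)) := by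
  induction K with
  | zero =>
    have hd0 : d = 0 := by omega
    subst hd0; rfl
  | succ K ih =>
    rcases Nat.lt_or_ge d (K + 1) with hlt | hge
    · rw [Finset.prod_range_succ, cq_mul_geom_high _ (2 ^ (K + 1 + 1) - 1) d
        (by have := Nat.one_le_two_pow (n := K + 1 + 1); omega)
        (by have := Nat.lt_two_pow_self (n := K + 1 + 1); omega),
        ih (by omega)]
    · have hd1 : d = K + 1 := by omega
      subst hd1; rfl

lemma coeff_mul_congr {x x' y y' : PowerSeries ℤ} (e : ℕ)
    (hx : ∀ d ≤ e, PowerSeries.coeff (R := ℤ) d x = PowerSeries.coeff (R := ℤ) d x')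
    (hy : ∀ d ≤ e, PowerSeries.coeff (R := ℤ) d y = PowerSeries.coeff (R := ℤ) d y') :
    PowerSeries.coeff (R := ℤ) e (x * y) = PowerSeries.coeff (R := ℤ) e (x' * y') := by
  rw [coeff_mul, coeff_mul]
  apply Finset.sum_congr rfl
  rintro ⟨a, b⟩ hab
  rw [Finset.HasAntidiagonal.mem_antidiagonal] at hab
  rw [hx a (by omega), hy b (by omega)]

lemma coeff_mul_congr' {x x' y y' : PowerSeries (PowerSeries ℤ)} (e : ℕ)
    (hx : ∀ d ≤ e, PowerSeries.coeff (R := PowerSeries ℤ) d x = PowerSeries.coeff (R := PowerSeries ℤ) d x')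
    (hy : ∀ d ≤ e, PowerSeries.coeff (R := PowerSeries ℤ) d y = PowerSeries.coeff (R := PowerSeries ℤ) d y') :
    PowerSeries.coeff (R := PowerSeries ℤ) e (x * y)
      = PowerSeries.coeff (R := PowerSeries ℤ) e (x' * y') := by
  rw [coeff_mul, coeff_mul]
  apply Finset.sum_congr rfl
  rintro ⟨a, b⟩ hab
  rw [Finset.HasAntidiagonal.mem_antidiagonal] at hab
  rw [hx a (by omega), hy b (by omega)]

noncomputable def Gk (k : ℕ) : PowerSeries (PowerSeries ℤ) :=
  qv * tv ^ 3 * PowerSeries.invOfUnit (1 - qv ^ 2 * tv ^ 2) 1 *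
    ∏ j ∈ Finset.range k, factorInv (j + 1)

noncomputable def Uk (k : ℕ) : PowerSeries ℤ :=
  PowerSeries.X * geomInv 2 * ∏ j ∈ Finset.range k, geomInv (2 ^ (j + 1) - 1)

lemma Gk_succ (k : ℕ) : Gk (k + 1) = Gk k * factorInv (k + 1) := by
  rw [Gk, Gk, Finset.prod_range_succ]; ring

lemma Uk_succ (k : ℕ) : Uk (k + 1) = Uk k * geomInv (2 ^ (k + 1) - 1) := by
  rw [Uk, Uk, Finset.prod_range_succ]; ring

lemma bnd_factor' (j : ℕ) (hj : 1 ≤ j) : Bnd 0 (factorInv j) := by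
  rw [factorInv]
  refine bnd_factor (2 ^ j - 1) (2 ^ j) Nat.one_le_two_pow ?_
  have h2 : 2 ≤ 2 ^ j := by
    calc 2 = 2 ^ 1 := rfl
      _ ≤ 2 ^ j := Nat.pow_le_pow_right (by omega) hj
  omega

lemma bnd_G (k : ℕ) : Bnd 1 (Gk k) := by
  induction k with
  | zero =>
    have h0 : Gk 0 = qv * tv ^ 3 * PowerSeries.invOfUnit (1 - qv ^ 2 * tv ^ 2) 1 := by
      rw [Gk, Finset.prod_range_zero, mul_one]
    rw [h0]
    exact bnd_mul bnd_qt3 (bnd_factor 2 2 (by omega) (by omega))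
  | succ k ih =>
    rw [Gk_succ]
    exact bnd_mul ih (bnd_factor' (k + 1) (by omega))

lemma main_lemma (i : ℕ) : ∀ k, ∀ e ≤ i,
    PowerSeries.coeff (R := ℤ) e (sigs (2 * i + 4) (Gk k)) = PowerSeries.coeff (R := ℤ) e (Uk k) := by
  intro k
  induction k with
  | zero =>
    intro e he
    have hG : Gk 0 = qv * tv ^ 3 * PowerSeries.invOfUnit (1 - qv ^ 2 * tv ^ 2) 1 := by
      rw [Gk, Finset.prod_range_zero, mul_one]
    have hU : Uk 0 = PowerSeries.X * geomInv 2 := by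
      rw [Uk, Finset.prod_range_zero, mul_one]
    rw [hG, hU,
      sig_mul bnd_qt3 (bnd_factor 2 2 (by omega) (by omega)) e (2 * i + 4) (by omega)]
    apply coeff_mul_congr e
    · intro d _
      rw [sig_qt3 (by omega)]
    · intro d hd
      exact cq_sig_factor 2 2 d (2 * i + 4) (by omega) (by omega) (by omega) (by omega)
  | succ k ih =>
    intro e he
    rw [Gk_succ, Uk_succ,
      sig_mul (bnd_G k) (bnd_factor' (k + 1) (by omega)) e (2 * i + 4) (by omega)]
    apply coeff_mul_congr e
    · intro d hd
      exact ih d (by omega)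
    · intro d hd
      rw [factorInv]
      refine cq_sig_factor (2 ^ (k + 1) - 1) (2 ^ (k + 1)) d (2 * i + 4)
        ?_ Nat.one_le_two_pow ?_ (by omega)
      · have h2 : 2 ≤ 2 ^ (k + 1) := by
          calc 2 = 2 ^ 1 := rfl
            _ ≤ 2 ^ (k + 1) := Nat.pow_le_pow_right (by omega) (by omega)
        omega
      · have h2 : 2 ≤ 2 ^ (k + 1) := by
          calc 2 = 2 ^ 1 := rfl
            _ ≤ 2 ^ (k + 1) := Nat.pow_le_pow_right (by omega) (by omega)
        omega

lemma Uk_stab (e K : ℕ) (heK : e < K) :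
    ∀ K', K ≤ K' → PowerSeries.coeff (R := ℤ) e (Uk K') = PowerSeries.coeff (R := ℤ) e (Uk K) := by
  intro K'
  induction K' with
  | zero => intro h0; exact absurd heK (by omega)
  | succ K' ih =>
    intro hle
    rcases Nat.lt_or_ge K (K' + 1) with hlt | hge
    · rw [Uk_succ, cq_mul_geom_high _ (2 ^ (K' + 1) - 1) e
        (by have := Nat.one_le_two_pow (n := K' + 1); omega)
        (by have := Nat.lt_two_pow_self (n := K' + 1); omega),
        ih (by omega)]
    · have : K = K' + 1 := by omega
      subst this; rfl

/-- Stabilization of coefficients: for every `i` and every odd `n ≥ 2i + 3`, the coefficient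
of `q^i t^n` in `P(q,t)` equals the coefficient of `q^i` in the stable series `F(q)`. -/
theorem coeff_stabilizes (i n : ℕ) (hn : Odd n) (h : 2 * i + 3 ≤ n) :
    coeffQT Pqt i n = PowerSeries.coeff (R := ℤ) i Fser := by
  have step1 : PowerSeries.coeff (R := PowerSeries ℤ) n Pqt
      = PowerSeries.coeff (R := PowerSeries ℤ) n
        (qv * tv ^ 3 * PowerSeries.invOfUnit (1 - qv ^ 2 * tv ^ 2) 1 *
          ∏ j ∈ Finset.range (n + 1), factorInv j) := by
    rw [Pqt]
    apply coeff_mul_congr' n (fun d _ => rfl)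
    intro d hd
    rw [prodQT, coeff_mk]
    exact (prodQT_stab d n hd).symm
  have step2 : qv * tv ^ 3 * PowerSeries.invOfUnit (1 - qv ^ 2 * tv ^ 2) 1 *
        ∏ j ∈ Finset.range (n + 1), factorInv j = factorInv 0 * Gk n := by
    rw [Finset.prod_range_succ', Gk]
    ring
  have hf0 : ∀ m, PowerSeries.coeff (R := PowerSeries ℤ) m (factorInv 0) = 1 := by
    intro m
    have h0 : factorInv 0 = PowerSeries.invOfUnit (1 - qv ^ 0 * tv ^ 1) 1 := by
      norm_num [factorInv]
    rw [h0, coeff_factor 0 1 m (le_refl 1), if_pos (one_dvd m)]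
    simp
  have step3 : PowerSeries.coeff (R := ℤ) i (PowerSeries.coeff (R := PowerSeries ℤ) n (factorInv 0 * Gk n))
      = ∑ b ∈ Finset.range (n + 1),
          PowerSeries.coeff (R := ℤ) i (PowerSeries.coeff (R := PowerSeries ℤ) b (Gk n)) := by
    rw [coeff_mul]
    have h1 : ∀ p ∈ Finset.HasAntidiagonal.antidiagonal n,
        PowerSeries.coeff (R := PowerSeries ℤ) p.1 (factorInv 0) *
          PowerSeries.coeff (R := PowerSeries ℤ) p.2 (Gk n)
        = PowerSeries.coeff (R := PowerSeries ℤ) p.2 (Gk n) := fun p _ => by rw [hf0, one_mul]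
    rw [Finset.sum_congr rfl h1,
      Finset.Nat.sum_antidiagonal_eq_sum_range_succ
        (fun a b => PowerSeries.coeff (R := PowerSeries ℤ) b (Gk n)) n,
      map_sum]
    exact Finset.sum_range_reflect
      (fun b => PowerSeries.coeff (R := ℤ) i (PowerSeries.coeff (R := PowerSeries ℤ) b (Gk n))) (n + 1)
  have step4 : PowerSeries.coeff (R := ℤ) i (sigs (2 * i + 4) (Gk n))
      = ∑ b ∈ Finset.range (n + 1),
          PowerSeries.coeff (R := ℤ) i (PowerSeries.coeff (R := PowerSeries ℤ) b (Gk n)) := by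
    rw [sigs, map_sum]
    apply Finset.sum_subset (Finset.range_subset_range.2 (by omega))
    intro b hb hnb
    rw [Finset.mem_range] at hb
    rw [Finset.mem_range, not_lt] at hnb
    exact bnd_G n i b (by omega)
  have step7 : PowerSeries.coeff (R := ℤ) i Fser = PowerSeries.coeff (R := ℤ) i (Uk (i + 1)) := by
    rw [Fser, Uk]
    apply coeff_mul_congr i (fun d _ => rfl)
    intro d hd
    rw [prodStable, coeff_mk]
    exact (prodStable_stab d i hd).symm
  calc coeffQT Pqt i n
      = PowerSeries.coeff (R := ℤ) i (PowerSeries.coeff (R := PowerSeries ℤ) n Pqt) := rfl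
    _ = PowerSeries.coeff (R := ℤ) i (PowerSeries.coeff (R := PowerSeries ℤ) n (factorInv 0 * Gk n)) := by
        rw [step1, step2]
    _ = ∑ b ∈ Finset.range (n + 1),
          PowerSeries.coeff (R := ℤ) i (PowerSeries.coeff (R := PowerSeries ℤ) b (Gk n)) := step3
    _ = PowerSeries.coeff (R := ℤ) i (sigs (2 * i + 4) (Gk n)) := step4.symm
    _ = PowerSeries.coeff (R := ℤ) i (Uk n) := main_lemma i n i le_rfl
    _ = PowerSeries.coeff (R := ℤ) i (Uk (i + 1)) := Uk_stab i (i + 1) (by omega) n (by omega)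
    _ = PowerSeries.coeff (R := ℤ) i Fser := step7.symm
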